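/- Every metric space (X, ρ) admits a strict total order ≺ on X such that the graph {(x, y) ∈ X × X : x ≺ y} is a Borel-measurable subset of X × X; in particular, every initial segment {y : y ≺ x} is Borel measurable in X. -/

import Mathlib

open MeasureTheory Set

namespace BorelTotalOrderAux

variable {X : Type*} [MetricSpace X]

/-- A union of an `ε`-separated family of closed sets is closed. -/
lemma isClosed_iUnion_of_separated {Y : Type*} [MetricSpace Y] {ι : Type*} (A : ι → Set Y)
    (ε : ℝ) (hε : 0 < ε) (hcl : ∀ i, IsClosed (A i))
    (hsep : ∀ i j, i ≠ j → ∀ z ∈ A i, ∀ w ∈ A j, ε ≤ dist z w) :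
    IsClosed (⋃ i, A i) := by
  rw [← isOpen_compl_iff, Metric.isOpen_iff]
  intro z hz
  by_cases h : ∃ i, ∃ w ∈ A i, dist z w < ε / 2
  · obtain ⟨i, w, hw, hwz⟩ := h
    have hzA : z ∉ A i := fun hmem => hz (mem_iUnion.2 ⟨i, hmem⟩)
    obtain ⟨η, hη, hball⟩ := Metric.isOpen_iff.1 (hcl i).isOpen_compl z hzA
    refine ⟨min η (ε / 2), lt_min hη (by linarith), fun u hu hmem => ?_⟩
    rw [Metric.mem_ball] at hu
    obtain ⟨j, hj⟩ := mem_iUnion.1 hmem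
    by_cases hij : j = i
    · subst hij
      exact hball (Metric.mem_ball.2 (lt_of_lt_of_le hu (min_le_left _ _))) hj
    · have hsep' := hsep j i hij u hj w hw
      have h1 : dist u w ≤ dist u z + dist z w := dist_triangle _ _ _
      have h2 : dist u z < ε / 2 := lt_of_lt_of_le hu (min_le_right _ _)
      linarith
  · push_neg at h
    refine ⟨ε / 2, by linarith, fun u hu hmem => ?_⟩
    obtain ⟨i, hi⟩ := mem_iUnion.1 hmem
    rw [Metric.mem_ball] at hu
    have h2 := h i u hi
    rw [dist_comm z u] at h2
    linarith

/-- The basic pieces: `D r δ a` is the set of points within `r - 2δ` of `a` and at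
distance `≥ r` from every point preceding `a` in the well-order. -/
def D (r δ : ℝ) (a : X) : Set X :=
  {z | dist z a < r - 2 * δ ∧ ∀ b, WellOrderingRel b a → r ≤ dist z b}

/-- Closed approximations of `D`. -/
def F (r δ : ℝ) (j : ℕ) (a : X) : Set X :=
  {z | dist z a ≤ r - 2 * δ - 1 / (j + 1) ∧ ∀ b, WellOrderingRel b a → r ≤ dist z b}

lemma isClosed_F (r δ : ℝ) (j : ℕ) (a : X) : IsClosed (F r δ j a) := by
  have h1 : IsClosed {z : X | dist z a ≤ r - 2 * δ - 1 / (j + 1)} :=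
    isClosed_le (Continuous.dist continuous_id continuous_const) continuous_const
  have h2 : IsClosed {z : X | ∀ b, WellOrderingRel b a → r ≤ dist z b} := by
    have : {z : X | ∀ b, WellOrderingRel b a → r ≤ dist z b} =
        ⋂ (b : X) (_ : WellOrderingRel b a), {z : X | r ≤ dist z b} := by
      ext z; simp [Set.mem_iInter]
    rw [this]
    refine isClosed_iInter fun b => isClosed_iInter fun _ => ?_
    exact isClosed_le continuous_const (Continuous.dist continuous_id continuous_const)
  exact h1.inter h2

lemma F_subset_D (r δ : ℝ) (j : ℕ) (a : X) : F r δ j a ⊆ D r δ a := by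
  intro z hz
  have hpos : (0 : ℝ) < 1 / (j + 1) := by positivity
  exact ⟨by have := hz.1; linarith, hz.2⟩

lemma F_mono (r δ : ℝ) {j j' : ℕ} (h : j ≤ j') (a : X) : F r δ j a ⊆ F r δ j' a := by
  intro z hz
  refine ⟨le_trans hz.1 ?_, hz.2⟩
  have h1 : (0:ℝ) < (j : ℝ) + 1 := by positivity
  have h2 : ((j : ℝ) + 1) ≤ ((j' : ℝ) + 1) := by exact_mod_cast by omega
  have := one_div_le_one_div_of_le h1 h2
  linarith

lemma D_eq_iUnion_F (r δ : ℝ) (a : X) : D r δ a = ⋃ j : ℕ, F r δ j a := by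
  ext z
  constructor
  · rintro ⟨h1, h2⟩
    obtain ⟨j, hj⟩ := exists_nat_one_div_lt (ε := r - 2 * δ - dist z a) (by linarith)
    exact mem_iUnion.2 ⟨j, ⟨by linarith, h2⟩⟩
  · intro hz
    obtain ⟨j, hj⟩ := mem_iUnion.1 hz
    exact F_subset_D r δ j a hj

lemma D_sep (r : ℝ) {δ : ℝ} (hδ : 0 < δ) {a b : X} (hab : a ≠ b) {z w : X}
    (hz : z ∈ D r δ a) (hw : w ∈ D r δ b) : 2 * δ ≤ dist z w := by
  rcases trichotomous_of WellOrderingRel a b with h | h | h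
  · -- a before b : w is at distance ≥ r from a, z within r - 2δ of a
    have h1 : r ≤ dist w a := hw.2 a h
    have h2 : dist z a < r - 2 * δ := hz.1
    have h3 : dist w a ≤ dist w z + dist z a := dist_triangle _ _ _
    rw [dist_comm w z] at h3
    linarith
  · exact absurd h hab
  · have h1 : r ≤ dist z b := hz.2 b h
    have h2 : dist w b < r - 2 * δ := hw.1
    have h3 : dist z b ≤ dist z w + dist w b := dist_triangle _ _ _
    linarith

lemma D_disjoint (r : ℝ) {δ : ℝ} (hδ : 0 < δ) {a b : X} {z : X}
    (hz : z ∈ D r δ a) (hz' : z ∈ D r δ b) : a = b := by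
  by_contra hab
  have := D_sep r hδ hab hz hz'
  simp [dist_self] at this
  linarith

lemma measurableSet_of_isClosed {Y : Type*} [TopologicalSpace Y] {s : Set Y}
    (h : IsClosed s) : MeasurableSet[borel Y] s := by
  letI : MeasurableSpace Y := borel Y
  haveI : BorelSpace Y := ⟨rfl⟩
  exact h.measurableSet

/-- Unions of `D`-pieces over an arbitrary index relation are Borel in `X × X`. -/
lemma measurable_iUnion_D_prod (r : ℝ) {δ : ℝ} (hδ : 0 < δ) (P : X → X → Prop) :
    MeasurableSet[borel (X × X)]
      (⋃ (a : X) (b : X) (_ : P a b), D r δ a ×ˢ D r δ b) := by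
  have key : (⋃ (a : X) (b : X) (_ : P a b), D r δ a ×ˢ D r δ b)
      = ⋃ (j : ℕ), ⋃ (p : {q : X × X // P q.1 q.2}),
          F r δ j p.1.1 ×ˢ F r δ j p.1.2 := by
    ext q
    simp only [mem_iUnion, Set.mem_prod]
    constructor
    · rintro ⟨a, b, hP, hqa, hqb⟩
      rw [D_eq_iUnion_F] at hqa hqb
      obtain ⟨j1, hj1⟩ := mem_iUnion.1 hqa
      obtain ⟨j2, hj2⟩ := mem_iUnion.1 hqb
      exact ⟨max j1 j2, ⟨(a, b), hP⟩,
        F_mono r δ (le_max_left _ _) a hj1, F_mono r δ (le_max_right _ _) b hj2⟩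
    · rintro ⟨j, ⟨⟨a, b⟩, hP⟩, h1, h2⟩
      exact ⟨a, b, hP, F_subset_D r δ j a h1, F_subset_D r δ j b h2⟩
  rw [key]
  refine MeasurableSet.iUnion fun j => ?_
  refine measurableSet_of_isClosed ?_
  refine isClosed_iUnion_of_separated _ (2 * δ) (by linarith) ?_ ?_
  · rintro ⟨⟨a, b⟩, hP⟩
    exact (isClosed_F r δ j a).prod (isClosed_F r δ j b)
  · rintro ⟨⟨a, b⟩, hP⟩ ⟨⟨a', b'⟩, hP'⟩ hne z hz w hw
    have hzw1 := hz.1; have hzw2 := hz.2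
    have hwz1 := hw.1; have hwz2 := hw.2
    have hab : a ≠ a' ∨ b ≠ b' := by
      by_contra h
      push_neg at h
      exact hne (by apply Subtype.ext; exact Prod.ext h.1 h.2)
    have hdist : dist z w = max (dist z.1 w.1) (dist z.2 w.2) := Prod.dist_eq
    rcases hab with h | h
    · have := D_sep r hδ h (F_subset_D r δ j a hzw1) (F_subset_D r δ j a' hwz1)
      rw [hdist]
      exact le_trans this (le_max_left _ _)
    · have := D_sep r hδ h (F_subset_D r δ j b hzw2) (F_subset_D r δ j b' hwz2)
      rw [hdist]
      exact le_trans this (le_max_right _ _)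

/-- The union of all `D`-pieces is Borel in `X`. -/
lemma measurable_iUnion_D (r : ℝ) {δ : ℝ} (hδ : 0 < δ) :
    MeasurableSet[borel X] (⋃ a : X, D r δ a) := by
  have key : (⋃ a : X, D r δ a) = ⋃ (j : ℕ), ⋃ a : X, F r δ j a := by
    ext z
    simp only [mem_iUnion]
    constructor
    · rintro ⟨a, ha⟩
      rw [D_eq_iUnion_F] at ha
      obtain ⟨j, hj⟩ := mem_iUnion.1 ha
      exact ⟨j, a, hj⟩
    · rintro ⟨j, a, ha⟩
      exact ⟨a, F_subset_D r δ j a ha⟩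
  rw [key]
  refine MeasurableSet.iUnion fun j => ?_
  refine measurableSet_of_isClosed ?_
  refine isClosed_iUnion_of_separated _ (2 * δ) (by linarith) (fun a => isClosed_F r δ j a) ?_
  intro a b hab z hz w hw
  exact D_sep r hδ hab (F_subset_D r δ j a hz) (F_subset_D r δ j b hw)

lemma ms_prod {s t : Set X} (hs : MeasurableSet[borel X] s) (ht : MeasurableSet[borel X] t) :
    MeasurableSet[borel (X × X)] (s ×ˢ t) := by
  letI : MeasurableSpace X := borel X
  haveI : BorelSpace X := ⟨rfl⟩
  letI : MeasurableSpace (X × X) := borel (X × X)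
  haveI : BorelSpace (X × X) := ⟨rfl⟩
  have h1 : Measurable (Prod.fst : X × X → X) := continuous_fst.measurable
  have h2 : Measurable (Prod.snd : X × X → X) := continuous_snd.measurable
  have := (h1 hs).inter (h2 ht)
  rwa [← Set.prod_eq] at this

/-- The coding function: `ff r δ z` is the unique `a` with `z ∈ D r δ a`, if any. -/
noncomputable def ff (r δ : ℝ) (z : X) : Option X :=
  haveI := Classical.propDecidable (∃ a, z ∈ D r δ a)
  if h : ∃ a, z ∈ D r δ a then some h.choose else none

lemma ff_eq_some {r δ : ℝ} (hδ : 0 < δ) {z : X} {a : X} :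
    ff r δ z = some a ↔ z ∈ D r δ a := by
  constructor
  · intro h
    unfold ff at h
    split_ifs at h with hex
    · have := hex.choose_spec
      rw [Option.some_inj] at h
      rwa [← h]
  · intro h
    unfold ff
    split_ifs with hex
    · have := hex.choose_spec
      exact congrArg some (D_disjoint r hδ this h)
    · exact absurd ⟨a, h⟩ hex

lemma ff_eq_none {r δ : ℝ} {z : X} :
    ff r δ z = none ↔ ∀ a, z ∉ D r δ a := by
  unfold ff
  split_ifs with hex
  · simp only [reduceCtorEq, false_iff, not_forall, not_not]
    exact hex
  · push_neg at hex
    simp [hex]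

/-- Strict order on `Option X` extending the well-ordering, with `none` on top. -/
def olt : Option X → Option X → Prop
  | some a, some b => WellOrderingRel a b
  | some _, none => True
  | none, _ => False

lemma olt_irrefl (u : Option X) : ¬ olt u u := by
  cases u with
  | none => simp [olt]
  | some a => exact fun h => (irrefl_of WellOrderingRel a) h

lemma olt_trans {u v w : Option X} (h1 : olt u v) (h2 : olt v w) : olt u w := by
  cases u with
  | none => exact absurd h1 (by simp [olt])
  | some a =>
    cases w with
    | none => trivial
    | some c =>
      cases v with
      | none => exact absurd h2 (by simp [olt])
      | some b => exact _root_.trans (r := WellOrderingRel) h1 h2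

lemma olt_total {u v : Option X} (h : u ≠ v) : olt u v ∨ olt v u := by
  cases u with
  | none =>
    cases v with
    | none => exact absurd rfl h
    | some b => exact Or.inr trivial
  | some a =>
    cases v with
    | none => exact Or.inl trivial
    | some b =>
      have hab : a ≠ b := fun hh => h (by rw [hh])
      rcases trichotomous_of WellOrderingRel a b with hh | hh | hh
      · exact Or.inl hh
      · exact absurd hh hab
      · exact Or.inr hh

lemma olt_ne {u v : Option X} (h : olt u v) : u ≠ v := by
  intro hh; subst hh; exact olt_irrefl u h

/-- Radius parameter. -/
noncomputable def R (k : ℕ) : ℝ := (1 / 2 : ℝ) ^ (Nat.unpair k).1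

/-- Separation parameter. -/
noncomputable def Δ (k : ℕ) : ℝ := (1 / 2 : ℝ) ^ (Nat.unpair k).2 / 2

lemma Δ_pos (k : ℕ) : 0 < Δ k := by
  unfold Δ; positivity

/-- The family of coding functions. -/
noncomputable def f (k : ℕ) (z : X) : Option X := ff (R k) (Δ k) z

lemma coverage {x y : X} (hxy : x ≠ y) : ∃ k : ℕ, f k x ≠ f k y := by
  have hd : 0 < dist x y := dist_pos.2 hxy
  obtain ⟨n, hn⟩ := exists_pow_lt_of_lt_one (x := dist x y / 2) (y := (1/2 : ℝ))
    (by linarith) (by norm_num)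
  set r : ℝ := (1 / 2 : ℝ) ^ n with hr
  have hrpos : 0 < r := by positivity
  have wf : WellFounded (WellOrderingRel : X → X → Prop) := IsWellFounded.wf
  set s : Set X := {b | dist x b < r} with hs
  have hsne : s.Nonempty := ⟨x, by simp [hs, hrpos]⟩
  set a : X := wf.min s hsne with ha
  have hxa : dist x a < r := wf.min_mem s hsne
  have hmin : ∀ b, WellOrderingRel b a → r ≤ dist x b := by
    intro b hb
    by_contra hcon
    push_neg at hcon
    exact wf.not_lt_min s (show b ∈ s from hcon) hb
  obtain ⟨m, hm⟩ := exists_pow_lt_of_lt_one (x := r - dist x a) (y := (1/2 : ℝ))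
    (by linarith) (by norm_num)
  refine ⟨Nat.pair n m, ?_⟩
  have hR : R (Nat.pair n m) = r := by simp [R, Nat.unpair_pair, hr]
  have hΔ : Δ (Nat.pair n m) = (1 / 2 : ℝ) ^ m / 2 := by simp [Δ, Nat.unpair_pair]
  have hxD : x ∈ D (R (Nat.pair n m)) (Δ (Nat.pair n m)) a := by
    constructor
    · rw [hR, hΔ]; linarith
    · intro b hb; rw [hR]; exact hmin b hb
  have hfx : f (Nat.pair n m) x = some a :=
    (ff_eq_some (Δ_pos _)).2 hxD
  intro hEq
  have hfy : f (Nat.pair n m) y = some a := by rw [← hEq]; exact hfx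
  have hyD : y ∈ D (R (Nat.pair n m)) (Δ (Nat.pair n m)) a :=
    (ff_eq_some (Δ_pos _)).1 hfy
  have h1 : dist y a < r := by
    have := hyD.1
    rw [hR] at this
    have hp := Δ_pos (Nat.pair n m)
    linarith
  have h2 : dist x y ≤ dist x a + dist a y := dist_triangle _ _ _
  rw [dist_comm a y] at h2
  linarith

/-- The lexicographic strict order. -/
noncomputable def lt (x y : X) : Prop :=
  ∃ k : ℕ, (∀ j < k, f j x = f j y) ∧ olt (f k x) (f k y)

lemma lt_irrefl' (x : X) : ¬ lt x x := by
  rintro ⟨k, _, h⟩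
  exact olt_irrefl _ h

lemma lt_trans' {x y z : X} (h1 : lt x y) (h2 : lt y z) : lt x z := by
  obtain ⟨k1, h1e, h1o⟩ := h1
  obtain ⟨k2, h2e, h2o⟩ := h2
  rcases lt_trichotomy k1 k2 with h | h | h
  · refine ⟨k1, fun j hj => ?_, ?_⟩
    · rw [h1e j hj, h2e j (hj.trans h)]
    · rw [← h2e k1 h]; exact h1o
  · subst h
    exact ⟨k1, fun j hj => by rw [h1e j hj, h2e j hj], olt_trans h1o h2o⟩
  · refine ⟨k2, fun j hj => ?_, ?_⟩
    · rw [h1e j (hj.trans h), h2e j hj]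
    · rw [h1e k2 h]; exact h2o

lemma lt_total' {x y : X} (hxy : x ≠ y) : lt x y ∨ lt y x := by
  classical
  have hcov := coverage hxy
  set k := Nat.find hcov with hk
  have hne : f k x ≠ f k y := Nat.find_spec hcov
  have heq : ∀ j < k, f j x = f j y := by
    intro j hj
    by_contra hcon
    exact absurd hcon (by simpa using Nat.find_min hcov hj)
  rcases olt_total hne with h | h
  · exact Or.inl ⟨k, heq, h⟩
  · exact Or.inr ⟨k, fun j hj => (heq j hj).symm, h⟩

/-- The `k`-th equality set is Borel. -/
lemma measurable_eqS (k : ℕ) :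
    MeasurableSet[borel (X × X)] {p : X × X | f k p.1 = f k p.2} := by
  have hδ := Δ_pos k
  set r := R k
  set δ := Δ k
  have hU : MeasurableSet[borel X] (⋃ a : X, D r δ a) := measurable_iUnion_D r hδ
  have key : {p : X × X | f k p.1 = f k p.2}
      = (⋃ (a : X) (b : X) (_ : a = b), D r δ a ×ˢ D r δ b)
        ∪ ((⋃ a : X, D r δ a)ᶜ ×ˢ (⋃ a : X, D r δ a)ᶜ) := by
    ext ⟨x, y⟩
    simp only [Set.mem_setOf_eq, Set.mem_union, mem_iUnion, Set.mem_prod, Set.mem_compl_iff]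
    constructor
    · intro h
      cases hfx : f k x with
      | none =>
        have hfy : f k y = none := by rw [← h]; exact hfx
        refine Or.inr ⟨?_, ?_⟩
        · rintro ⟨a, ha⟩
          exact (ff_eq_none.1 hfx) a ha
        · rintro ⟨a, ha⟩
          exact (ff_eq_none.1 hfy) a ha
      | some a =>
        have hfy : f k y = some a := by rw [← h]; exact hfx
        exact Or.inl ⟨a, a, rfl, (ff_eq_some hδ).1 hfx, (ff_eq_some hδ).1 hfy⟩
    · rintro (⟨a, b, rfl, hxa, hya⟩ | ⟨hx, hy⟩)
      · rw [show f k x = some a from (ff_eq_some hδ).2 hxa,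
          show f k y = some a from (ff_eq_some hδ).2 hya]
      · have hfx : f k x = none := ff_eq_none.2 fun a ha => hx ⟨a, ha⟩
        have hfy : f k y = none := ff_eq_none.2 fun a ha => hy ⟨a, ha⟩
        rw [hfx, hfy]
  rw [key]
  exact (measurable_iUnion_D_prod r hδ (fun a b => a = b)).union
    (ms_prod hU.compl hU.compl)

/-- The `k`-th strict-comparison set is Borel. -/
lemma measurable_oltS (k : ℕ) :
    MeasurableSet[borel (X × X)] {p : X × X | olt (f k p.1) (f k p.2)} := by
  have hδ := Δ_pos k
  set r := R k
  set δ := Δ k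
  have hU : MeasurableSet[borel X] (⋃ a : X, D r δ a) := measurable_iUnion_D r hδ
  have key : {p : X × X | olt (f k p.1) (f k p.2)}
      = (⋃ (a : X) (b : X) (_ : WellOrderingRel a b), D r δ a ×ˢ D r δ b)
        ∪ ((⋃ a : X, D r δ a) ×ˢ (⋃ a : X, D r δ a)ᶜ) := by
    ext ⟨x, y⟩
    simp only [Set.mem_setOf_eq, Set.mem_union, mem_iUnion, Set.mem_prod, Set.mem_compl_iff]
    constructor
    · intro h
      cases hfx : f k x with
      | none => rw [hfx] at h; exact absurd h (by simp [olt])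
      | some a =>
        cases hfy : f k y with
        | none =>
          refine Or.inr ⟨⟨a, (ff_eq_some hδ).1 hfx⟩, ?_⟩
          rintro ⟨b, hb⟩
          exact (ff_eq_none.1 hfy) b hb
        | some b =>
          rw [hfx, hfy] at h
          exact Or.inl ⟨a, b, h, (ff_eq_some hδ).1 hfx, (ff_eq_some hδ).1 hfy⟩
    · rintro (⟨a, b, hab, hxa, hyb⟩ | ⟨hx, hy⟩)
      · rw [show f k x = some a from (ff_eq_some hδ).2 hxa,
          show f k y = some b from (ff_eq_some hδ).2 hyb]
        exact hab
      · obtain ⟨a, ha⟩ := hx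
        have hfx : f k x = some a := (ff_eq_some hδ).2 ha
        have hfy : f k y = none := ff_eq_none.2 fun b hb => hy ⟨b, hb⟩
        rw [hfx, hfy]
        trivial
  rw [key]
  exact (measurable_iUnion_D_prod r hδ WellOrderingRel).union (ms_prod hU hU.compl)

lemma measurable_graph :
    MeasurableSet[borel (X × X)] {p : X × X | lt p.1 p.2} := by
  have key : {p : X × X | lt p.1 p.2}
      = ⋃ k : ℕ, ((⋂ (j : ℕ) (_ : j < k), {p : X × X | f j p.1 = f j p.2})
          ∩ {p : X × X | olt (f k p.1) (f k p.2)}) := by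
    ext ⟨x, y⟩
    simp only [Set.mem_setOf_eq, mem_iUnion, Set.mem_inter_iff, Set.mem_iInter]
    rfl
  rw [key]
  refine MeasurableSet.iUnion fun k => ?_
  exact (MeasurableSet.iInter fun j => MeasurableSet.iInter fun _ =>
    measurable_eqS j).inter (measurable_oltS k)

end BorelTotalOrderAux

open BorelTotalOrderAux in
/-- Every metric space admits a strict total order whose graph is a Borel subset of
`X × X` (Borel for the product topology); in particular every initial segment
`{y : y ≺ x}` is a Borel subset of `X`. -/
theorem exists_borel_total_order (X : Type*) [MetricSpace X] :
    ∃ lt : X → X → Prop,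
      (∀ x, ¬ lt x x) ∧
      (∀ x y z, lt x y → lt y z → lt x z) ∧
      (∀ x y, x ≠ y → lt x y ∨ lt y x) ∧
      MeasurableSet[borel (X × X)] {p : X × X | lt p.1 p.2} ∧
      (∀ x : X, MeasurableSet[borel X] {y : X | lt y x}) := by
  refine ⟨BorelTotalOrderAux.lt, fun x => lt_irrefl' x,
    fun x y z => lt_trans', fun x y => lt_total', measurable_graph, ?_⟩
  intro x
  have hgraph := measurable_graph (X := X)
  letI : MeasurableSpace X := borel X
  haveI : BorelSpace X := ⟨rfl⟩
  letI : MeasurableSpace (X × X) := borel (X × X)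
  haveI : BorelSpace (X × X) := ⟨rfl⟩
  have hcont : Continuous (fun y : X => (y, x)) := continuous_id.prodMk continuous_const
  have : {y : X | BorelTotalOrderAux.lt y x}
      = (fun y : X => (y, x)) ⁻¹' {p : X × X | BorelTotalOrderAux.lt p.1 p.2} := rfl
  rw [this]
  exact hcont.measurable hgraph
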